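/- Let μ : [0,1] → ℝ be of class H³ (C², with μ'' absolutely continuous and a.e. derivative in L²((0,1))), set φ₁(x) := √2 sin(πx), φ_k(x) := √2 sin(kπx) and m_k := ∫₀¹ μ(x) φ₁(x) φ_k(x) dx. If there exists c > 0 such that |m_k| ≥ c/k³ for every k ∈ ℕ* (Hypothesis (H)), then μ'(1) ≠ μ'(0) and μ'(1) ≠ −μ'(0). -/

import Mathlib

open MeasureTheory

noncomputable section

/-- `φ_k(x) = √2 sin(kπx)`, `k ∈ ℕ*`; an orthonormal basis of `L²((0,1);ℝ)`. -/
def phi (k : ℕ) (x : ℝ) : ℝ := Real.sqrt 2 * Real.sin (k * Real.pi * x)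

/-- `μ : [0,1] → ℝ` is of class `H³`: it is `C²`, `μ''` is absolutely continuous
(it is the integral of a density `g` on `[0,1]`), and this a.e. third derivative `g`
lies in `L²((0,1))`. -/
def IsH3 (μ : ℝ → ℝ) : Prop :=
  ContDiff ℝ 2 μ ∧
    ∃ g : ℝ → ℝ, MemLp g 2 (volume.restrict (Set.Ioo (0:ℝ) 1)) ∧
      ∀ x ∈ Set.Icc (0:ℝ) 1,
        iteratedDeriv 2 μ x = iteratedDeriv 2 μ 0 + ∫ t in (0:ℝ)..x, g t

/-- The sine Fourier coefficient `m_k = ⟨μφ₁, φ_k⟩ = ∫₀¹ μ(x) φ₁(x) φ_k(x) dx`. -/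
def mcoef (μ : ℝ → ℝ) (k : ℕ) : ℝ := ∫ x in (0:ℝ)..1, μ x * phi 1 x * phi k x

section Aux
open Set Filter

set_option maxHeartbeats 1000000

lemma phi_mul (k : ℕ) (x : ℝ) :
    phi 1 x * phi k x
      = Real.cos (((k:ℝ)-1)*Real.pi*x) - Real.cos (((k:ℝ)+1)*Real.pi*x) := by
  have h2 : Real.sqrt 2 * Real.sqrt 2 = 2 := Real.mul_self_sqrt (by norm_num)
  have h := Real.cos_sub_cos (((k:ℝ)-1)*Real.pi*x) (((k:ℝ)+1)*Real.pi*x)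
  have e1 : ((((k:ℝ)-1)*Real.pi*x + ((k:ℝ)+1)*Real.pi*x))/2 = (k:ℝ)*Real.pi*x := by ring
  have e2 : ((((k:ℝ)-1)*Real.pi*x - ((k:ℝ)+1)*Real.pi*x))/2 = -(Real.pi*x) := by ring
  rw [e1, e2, Real.sin_neg] at h
  simp only [phi, Nat.cast_one, one_mul]
  rw [h]
  linear_combination (Real.sin (Real.pi*x) * Real.sin ((k:ℝ)*Real.pi*x)) * h2

lemma integral_cos_mul' {c : ℝ} (hc : c ≠ 0) (a b : ℝ) :
    ∫ x in a..b, Real.cos (c*x) = (Real.sin (c*b) - Real.sin (c*a))/c := by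
  rw [intervalIntegral.integral_comp_mul_left Real.cos hc, integral_cos]
  rw [smul_eq_mul]; ring

lemma hasDeriv_sin (c : ℝ) (hc : c ≠ 0) (x : ℝ) :
    HasDerivAt (fun y => Real.sin (c*y)/c) (Real.cos (c*x)) x := by
  have h := ((Real.hasDerivAt_sin (c*x)).comp x ((hasDerivAt_id x).const_mul c)).div_const c
  exact h.congr_deriv (by field_simp)

lemma hasDeriv_cos (c : ℝ) (hc : c ≠ 0) (x : ℝ) :
    HasDerivAt (fun y => -(Real.cos (c*y))/c) (Real.sin (c*x)) x := by
  have h := (((Real.hasDerivAt_cos (c*x)).comp x ((hasDerivAt_id x).const_mul c)).neg).div_const c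
  exact h.congr_deriv (by field_simp)

lemma fubini_key (g : ℝ → ℝ) (hg : IntegrableOn g (Ioo (0:ℝ) 1)) {c : ℝ} (hc : 0 < c)
    (hsc : Real.sin c = 0) :
    ∫ x in Ioo (0:ℝ) 1, (∫ t in Ioo (0:ℝ) x, g t) * Real.cos (c*x)
      = -(1/c) * ∫ t in Ioo (0:ℝ) 1, g t * Real.sin (c*t) := by
  have hIoo : MeasurableSet (Ioo (0:ℝ) 1) := measurableSet_Ioo
  have step1 : ∀ x ∈ Ioo (0:ℝ) 1,
      (∫ t in Ioo (0:ℝ) x, g t) * Real.cos (c*x)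
        = ∫ t in Ioo (0:ℝ) 1, ((Ioo (0:ℝ) x).indicator g t) * Real.cos (c*x) := by
    intro x hx
    rw [integral_mul_const, setIntegral_indicator measurableSet_Ioo]
    have : Ioo (0:ℝ) 1 ∩ Ioo 0 x = Ioo 0 x := by
      apply inter_eq_self_of_subset_right
      exact Ioo_subset_Ioo le_rfl hx.2.le
    rw [this]
  rw [setIntegral_congr_fun hIoo step1]
  have hInt : Integrable (Function.uncurry fun x t => ((Ioo (0:ℝ) x).indicator g t) * Real.cos (c*x))
      ((volume.restrict (Ioo (0:ℝ) 1)).prod (volume.restrict (Ioo (0:ℝ) 1))) := by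
    have hbase : Integrable (fun p : ℝ × ℝ => Real.cos (c*p.1) * g p.2)
        ((volume.restrict (Ioo (0:ℝ) 1)).prod (volume.restrict (Ioo (0:ℝ) 1))) := by
      haveI : IsFiniteMeasure (volume.restrict (Ioo (0:ℝ) 1)) := by
        constructor
        rw [Measure.restrict_apply_univ]
        simp [Real.volume_Ioo]
      have hcos : Integrable (fun x : ℝ => Real.cos (c*x)) (volume.restrict (Ioo (0:ℝ) 1)) := by
        apply Integrable.mono' (integrable_const 1)
        · exact ((Real.continuous_cos.comp (continuous_const.mul continuous_id)).aestronglyMeasurable)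
        · filter_upwards with x using by simpa using Real.abs_cos_le_one (c*x)
      exact hcos.mul_prod hg
    have hset : MeasurableSet {p : ℝ × ℝ | 0 < p.2 ∧ p.2 < p.1} := by
      exact ((measurableSet_lt measurable_const measurable_snd).inter
        (measurableSet_lt measurable_snd measurable_fst))
    have heq : (Function.uncurry fun x t => ((Ioo (0:ℝ) x).indicator g t) * Real.cos (c*x))
        = {p : ℝ × ℝ | 0 < p.2 ∧ p.2 < p.1}.indicator (fun p => Real.cos (c*p.1) * g p.2) := by
      funext p
      rcases p with ⟨x, t⟩
      simp only [Function.uncurry_apply_pair, Set.indicator_apply, Set.mem_Ioo,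
        Set.mem_setOf_eq]
      split_ifs with h
      · ring
      · rw [zero_mul]
    rw [heq]
    exact hbase.indicator hset
  rw [integral_integral_swap hInt]
  have step3 : ∀ t ∈ Ioo (0:ℝ) 1,
      (∫ x in Ioo (0:ℝ) 1, ((Ioo (0:ℝ) x).indicator g t) * Real.cos (c*x))
        = g t * (-(Real.sin (c*t))/c) := by
    intro t ht
    have h1 : ∀ x : ℝ, ((Ioo (0:ℝ) x).indicator g t) * Real.cos (c*x)
        = (Ioi t).indicator (fun x => g t * Real.cos (c*x)) x := by
      intro x
      by_cases h : t < x
      · rw [Set.indicator_of_mem (by exact ⟨ht.1, h⟩ : t ∈ Ioo 0 x),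
          Set.indicator_of_mem (by exact h : x ∈ Ioi t)]
      · rw [Set.indicator_of_notMem (by simpa [Set.mem_Ioo, ht.1] using h),
          Set.indicator_of_notMem (by simpa using h), zero_mul]
    simp_rw [h1]
    rw [setIntegral_indicator measurableSet_Ioi]
    have : Ioo (0:ℝ) 1 ∩ Ioi t = Ioo t 1 := by
      ext y; simp only [mem_inter_iff, mem_Ioo, mem_Ioi]
      constructor
      · rintro ⟨⟨_, hy2⟩, hy3⟩; exact ⟨hy3, hy2⟩
      · rintro ⟨hy1, hy2⟩; exact ⟨⟨ht.1.trans hy1, hy2⟩, hy1⟩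
    rw [this, integral_const_mul]
    congr 1
    rw [← integral_Ioc_eq_integral_Ioo, ← intervalIntegral.integral_of_le ht.2.le,
      integral_cos_mul' hc.ne']
    rw [mul_one, hsc]
    ring
  rw [setIntegral_congr_fun hIoo step3]
  rw [← integral_const_mul]
  congr 1; funext t; ring

lemma tendsto_S (g : ℝ → ℝ) (hg : IntegrableOn g (Ioo (0:ℝ) 1)) :
    Tendsto (fun n : ℕ => ∫ t in Ioo (0:ℝ) 1, g t * Real.sin ((n:ℝ)*Real.pi*t))
      atTop (nhds 0) := by
  set f : ℝ → ℂ := (Ioo (0:ℝ) 1).indicator (fun t => (g t : ℂ)) with hf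
  have h0 := Real.tendsto_integral_exp_smul_cocompact f
  have hseq : Tendsto (fun n : ℕ => (n:ℝ)/2) atTop (cocompact ℝ) := by
    rw [cocompact_eq_atBot_atTop]
    exact (Tendsto.atTop_div_const (by norm_num) tendsto_natCast_atTop_atTop).mono_right
      le_sup_right
  have h1 := h0.comp hseq
  have key : ∀ n : ℕ, (∫ t in Ioo (0:ℝ) 1, g t * Real.sin ((n:ℝ)*Real.pi*t))
      = -((∫ v : ℝ, Real.fourierChar (-(v * ((n:ℝ)/2))) • f v).im) := by
    intro n
    have hpt : (fun v : ℝ => Real.fourierChar (-(v * ((n:ℝ)/2))) • f v)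
        = (Ioo (0:ℝ) 1).indicator
            (fun t => Complex.exp ((↑(-((n:ℝ)*Real.pi*t)) : ℂ) * Complex.I) * (g t:ℂ)) := by
      funext v
      simp only [hf, Set.indicator_apply]
      split_ifs with h
      · rw [Circle.smul_def, Real.fourierChar_apply]
        congr 2
        push_cast
        ring
      · simp
    have hInt : Integrable
        (fun t : ℝ => Complex.exp ((↑(-((n:ℝ)*Real.pi*t)) : ℂ) * Complex.I) * (g t:ℂ))
        (volume.restrict (Ioo (0:ℝ) 1)) := by
      apply Integrable.bdd_mul (c := 1) hg.ofReal
      · apply Continuous.aestronglyMeasurable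
        exact Complex.continuous_exp.comp
          (((Complex.continuous_ofReal.comp (continuous_const.mul continuous_id).neg)).mul
            continuous_const)
      · refine Filter.Eventually.of_forall (fun v => ?_)
        rw [Complex.norm_exp_ofReal_mul_I]
    have him : ∀ v : ℝ,
        (Complex.exp ((↑(-((n:ℝ)*Real.pi*v)) : ℂ) * Complex.I) * (g v:ℂ)).im
          = -(g v * Real.sin ((n:ℝ)*Real.pi*v)) := by
      intro v
      rw [Complex.mul_im, Complex.ofReal_im, Complex.ofReal_re,
        Complex.exp_ofReal_mul_I_im, Real.sin_neg]
      ring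
    have hswap : (∫ x in Ioo (0:ℝ) 1,
          Complex.exp ((↑(-((n:ℝ)*Real.pi*x)) : ℂ) * Complex.I) * (g x:ℂ)).im
        = ∫ x in Ioo (0:ℝ) 1,
            (Complex.exp ((↑(-((n:ℝ)*Real.pi*x)) : ℂ) * Complex.I) * (g x:ℂ)).im := by
      rw [← Complex.imCLM_apply]
      exact (ContinuousLinearMap.integral_comp_comm _ hInt).symm
    rw [hpt, integral_indicator measurableSet_Ioo, hswap]
    simp_rw [him]
    rw [integral_neg]
    ring
  have h2 : Tendsto (fun n : ℕ =>
      -((∫ v : ℝ, Real.fourierChar (-(v * ((n:ℝ)/2))) • f v).im)) atTop (nhds 0) := by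
    have := (Complex.continuous_im.tendsto 0).comp h1
    simpa using this.neg
  simpa [key] using h2

lemma Ccoef_eq (μ g : ℝ → ℝ) (hC2 : ContDiff ℝ 2 μ)
    (hgI : IntegrableOn g (Ioo (0:ℝ) 1))
    (hFTC : ∀ x ∈ Icc (0:ℝ) 1, iteratedDeriv 2 μ x = iteratedDeriv 2 μ 0 + ∫ t in (0:ℝ)..x, g t)
    (n : ℕ) (hn : 1 ≤ n) :
    (∫ x in (0:ℝ)..1, μ x * Real.cos ((n:ℝ)*Real.pi*x))
      = -(deriv μ 0 - (-1)^n * deriv μ 1)/((n:ℝ)^2*Real.pi^2)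
        + (∫ t in Ioo (0:ℝ) 1, g t * Real.sin ((n:ℝ)*Real.pi*t))/((n:ℝ)^3*Real.pi^3) := by
  have hnpos : (0:ℝ) < n := by exact_mod_cast hn
  have hcc' : Real.cos ((n:ℝ)*Real.pi) = (-1)^n := by simpa using Real.cos_nat_mul_pi_sub 0 n
  have hsc' : Real.sin ((n:ℝ)*Real.pi) = 0 := Real.sin_nat_mul_pi n
  set c := (n:ℝ)*Real.pi with hcdef
  have hc : 0 < c := mul_pos hnpos Real.pi_pos
  have hμd : Differentiable ℝ μ := hC2.differentiable two_ne_zero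
  have hd1 : ContDiff ℝ 1 (deriv μ) := by
    have h2 : ContDiff ℝ ((1:ℕ) + 1) μ := by exact_mod_cast hC2
    exact (contDiff_succ_iff_deriv.mp h2).2.2
  have hder1 : Differentiable ℝ (deriv μ) := hd1.differentiable one_ne_zero
  have hcontD1 : Continuous (deriv μ) := hd1.continuous
  have hcontD2 : Continuous (deriv (deriv μ)) := hd1.continuous_deriv le_rfl
  have hcos_cont : Continuous fun x : ℝ => Real.cos (c*x) :=
    Real.continuous_cos.comp (continuous_const.mul continuous_id)
  have hsin_cont : Continuous fun x : ℝ => Real.sin (c*x) :=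
    Real.continuous_sin.comp (continuous_const.mul continuous_id)
  set D := ∫ t in Ioo (0:ℝ) 1, g t * Real.sin (c*t) with hDdef
  have h1 : ∫ x in (0:ℝ)..1, μ x * Real.cos (c*x)
      = μ 1 * (Real.sin (c*1)/c) - μ 0 * (Real.sin (c*0)/c)
        - ∫ x in (0:ℝ)..1, deriv μ x * (Real.sin (c*x)/c) :=
    intervalIntegral.integral_mul_deriv_eq_deriv_mul
      (fun x _ => (hμd x).hasDerivAt) (fun x _ => hasDeriv_sin c hc.ne' x)
      (hcontD1.intervalIntegrable 0 1) (hcos_cont.intervalIntegrable 0 1)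
  have e1 : ∫ x in (0:ℝ)..1, μ x * Real.cos (c*x)
      = -∫ x in (0:ℝ)..1, deriv μ x * (Real.sin (c*x)/c) := by
    rw [h1, mul_one, mul_zero, hsc', Real.sin_zero]
    ring
  have e2 : ∫ x in (0:ℝ)..1, deriv μ x * (Real.sin (c*x)/c)
      = (∫ x in (0:ℝ)..1, deriv μ x * Real.sin (c*x))/c := by
    simp_rw [← mul_div_assoc]
    rw [intervalIntegral.integral_div]
  have h2 : ∫ x in (0:ℝ)..1, deriv μ x * Real.sin (c*x)
      = deriv μ 1 * (-(Real.cos (c*1))/c) - deriv μ 0 * (-(Real.cos (c*0))/c)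
        - ∫ x in (0:ℝ)..1, deriv (deriv μ) x * (-(Real.cos (c*x))/c) :=
    intervalIntegral.integral_mul_deriv_eq_deriv_mul
      (fun x _ => (hder1 x).hasDerivAt) (fun x _ => hasDeriv_cos c hc.ne' x)
      (hcontD2.intervalIntegrable 0 1) (hsin_cont.intervalIntegrable 0 1)
  have e3 : ∫ x in (0:ℝ)..1, deriv (deriv μ) x * (-(Real.cos (c*x))/c)
      = -(∫ x in (0:ℝ)..1, deriv (deriv μ) x * Real.cos (c*x))/c := by
    have hptw : ∀ x : ℝ, deriv (deriv μ) x * (-(Real.cos (c*x))/c)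
        = -(deriv (deriv μ) x * Real.cos (c*x))/c := fun x => by ring
    simp_rw [hptw]
    rw [intervalIntegral.integral_div, intervalIntegral.integral_neg]
  have h3 : ∫ x in (0:ℝ)..1, deriv (deriv μ) x * Real.cos (c*x) = -(1/c) * D := by
    have hit : deriv (deriv μ) = iteratedDeriv 2 μ := by
      simp [iteratedDeriv_succ, iteratedDeriv_zero]
    rw [intervalIntegral.integral_of_le zero_le_one, integral_Ioc_eq_integral_Ioo]
    have hcongr : ∀ x ∈ Ioo (0:ℝ) 1, deriv (deriv μ) x * Real.cos (c*x)
        = (deriv (deriv μ) 0 + ∫ t in Ioo (0:ℝ) x, g t) * Real.cos (c*x) := by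
      intro x hx
      rw [hit, hFTC x (Ioo_subset_Icc_self hx), intervalIntegral.integral_of_le hx.1.le,
        integral_Ioc_eq_integral_Ioo]
    rw [setIntegral_congr_fun measurableSet_Ioo hcongr]
    have hint_total : IntegrableOn
        (fun x => (deriv (deriv μ) 0 + ∫ t in Ioo (0:ℝ) x, g t) * Real.cos (c*x))
        (Ioo (0:ℝ) 1) := by
      have hcont2 : Continuous fun x => deriv (deriv μ) x * Real.cos (c*x) :=
        hcontD2.mul hcos_cont
      exact ((hcont2.integrableOn_Icc (a := 0) (b := 1)).mono_set
        Ioo_subset_Icc_self).congr_fun hcongr measurableSet_Ioo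
    have hint1 : IntegrableOn (fun x => deriv (deriv μ) 0 * Real.cos (c*x)) (Ioo (0:ℝ) 1) :=
      ((continuous_const.mul hcos_cont).integrableOn_Icc (a := 0) (b := 1)).mono_set
        Ioo_subset_Icc_self
    have hint2 : IntegrableOn (fun x => (∫ t in Ioo (0:ℝ) x, g t) * Real.cos (c*x))
        (Ioo (0:ℝ) 1) := by
      have hsub : IntegrableOn
          ((fun x => (deriv (deriv μ) 0 + ∫ t in Ioo (0:ℝ) x, g t) * Real.cos (c*x))
            - fun x => deriv (deriv μ) 0 * Real.cos (c*x)) (Ioo (0:ℝ) 1) :=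
        hint_total.sub hint1
      refine hsub.congr_fun (fun x _ => ?_) measurableSet_Ioo
      simp only [Pi.sub_apply]
      ring
    simp_rw [add_mul]
    rw [integral_add hint1 hint2]
    have hz : ∫ x in Ioo (0:ℝ) 1, deriv (deriv μ) 0 * Real.cos (c*x) = 0 := by
      rw [integral_const_mul, ← integral_Ioc_eq_integral_Ioo,
        ← intervalIntegral.integral_of_le zero_le_one, integral_cos_mul' hc.ne']
      rw [mul_one, mul_zero, hsc', Real.sin_zero]
      ring
    rw [hz, zero_add, fubini_key g hgI hc hsc']
  have I1 : ∫ x in (0:ℝ)..1, deriv μ x * Real.sin (c*x)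
      = (deriv μ 0 - (-1)^n * deriv μ 1)/c + (-(1/c) * D)/c := by
    rw [h2, e3, h3, mul_one, mul_zero, hcc', Real.cos_zero]
    ring
  rw [e1, e2, I1, show (n:ℝ)^2*Real.pi^2 = c^2 by rw [hcdef]; ring,
    show (n:ℝ)^3*Real.pi^3 = c^3 by rw [hcdef]; ring]
  field_simp
  ring

end Aux

/-- If `μ` is of class `H³` and satisfies Hypothesis (H)
(`∃ c > 0, |m_k| ≥ c/k³` for all `k ∈ ℕ*`), then `μ'(1) ≠ μ'(0)` and `μ'(1) ≠ −μ'(0)`. -/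
theorem statement5 (μ : ℝ → ℝ) (hμ : IsH3 μ)
    (hH : ∃ c > (0:ℝ), ∀ k : ℕ, 1 ≤ k → c / (k : ℝ) ^ 3 ≤ |mcoef μ k|) :
    deriv μ 1 ≠ deriv μ 0 ∧ deriv μ 1 ≠ -deriv μ 0 := by
  classical
  obtain ⟨hC2, g, hg2, hFTC⟩ := hμ
  obtain ⟨c, hcpos, hH⟩ := hH
  have hgI : MeasureTheory.IntegrableOn g (Set.Ioo (0:ℝ) 1) := by
    haveI : IsFiniteMeasure (volume.restrict (Set.Ioo (0:ℝ) 1)) := by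
      constructor
      rw [Measure.restrict_apply_univ]
      simp [Real.volume_Ioo]
    exact hg2.integrable one_le_two
  set S : ℕ → ℝ := fun n => ∫ t in Set.Ioo (0:ℝ) 1, g t * Real.sin ((n:ℝ)*Real.pi*t) with hSdef
  have hS : Filter.Tendsto S Filter.atTop (nhds 0) := tendsto_S g hgI
  have hπ : (0:ℝ) < Real.pi := Real.pi_pos
  -- the main expansion of `mcoef`
  have hm : ∀ k : ℕ, 2 ≤ k → mcoef μ k
      = -((deriv μ 0 - (-1)^(k+1) * deriv μ 1))
          * (1/(((k:ℝ)-1)^2*Real.pi^2) - 1/(((k:ℝ)+1)^2*Real.pi^2))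
        + (S (k-1)/(((k:ℝ)-1)^3*Real.pi^3) - S (k+1)/(((k:ℝ)+1)^3*Real.pi^3)) := by
    intro k hk
    have hcast1 : ((k-1:ℕ):ℝ) = (k:ℝ)-1 := by
      have h2 : (1:ℕ) ≤ k := by omega
      exact_mod_cast (Nat.cast_sub h2 : ((k-1:ℕ):ℝ) = (k:ℝ) - (1:ℕ))
    have hcont1 : Continuous fun x : ℝ => μ x * Real.cos (((k-1:ℕ):ℝ)*Real.pi*x) :=
      hC2.continuous.mul (Real.continuous_cos.comp (continuous_const.mul continuous_id))
    have hcont2 : Continuous fun x : ℝ => μ x * Real.cos (((k+1:ℕ):ℝ)*Real.pi*x) :=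
      hC2.continuous.mul (Real.continuous_cos.comp (continuous_const.mul continuous_id))
    have hsplit : mcoef μ k = (∫ x in (0:ℝ)..1, μ x * Real.cos (((k-1:ℕ):ℝ)*Real.pi*x))
        - ∫ x in (0:ℝ)..1, μ x * Real.cos (((k+1:ℕ):ℝ)*Real.pi*x) := by
      unfold mcoef
      rw [← intervalIntegral.integral_sub (hcont1.intervalIntegrable 0 1)
        (hcont2.intervalIntegrable 0 1)]
      apply intervalIntegral.integral_congr
      intro x _
      simp only
      rw [mul_assoc, phi_mul, hcast1]
      push_cast
      ring
    have hpow : (-1:ℝ)^(k-1) = (-1)^(k+1) := by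
      rw [show k+1 = (k-1)+2 by omega, pow_add]
      norm_num
    simp only [hSdef]
    rw [hsplit, Ccoef_eq μ g hC2 hgI hFTC (k-1) (by omega),
      Ccoef_eq μ g hC2 hgI hFTC (k+1) (by omega), hcast1, hpow]
    push_cast
    ring
  -- the contradiction machine
  have key : ∀ r : ℕ, deriv μ 0 - (-1:ℝ)^(r+1) * deriv μ 1 = 0 → False := by
    intro r hzero
    set q : ℕ → ℕ := fun j => 2*j + 2 + r with hqdef
    have hq2 : ∀ j, 2 ≤ q j := fun j => by simp only [hqdef]; omega
    have hqsign : ∀ j, (-1:ℝ)^(q j + 1) = (-1:ℝ)^(r+1) := by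
      intro j
      simp only [hqdef]
      rw [show 2*j+2+r+1 = 2*(j+1) + (r+1) by ring, pow_add, pow_mul]
      norm_num
    have hval : ∀ j, mcoef μ (q j) = S (q j - 1)/(((q j:ℝ)-1)^3*Real.pi^3)
        - S (q j + 1)/(((q j:ℝ)+1)^3*Real.pi^3) := by
      intro j
      rw [hm (q j) (hq2 j), hqsign j, hzero]
      ring
    have hub : ∀ j, c ≤ 8/Real.pi^3 * |S (q j - 1)| + 8/Real.pi^3 * |S (q j + 1)| := by
      intro j
      have hk := hq2 j
      have hkr : (2:ℝ) ≤ (q j : ℝ) := by exact_mod_cast hk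
      have hkp : (0:ℝ) < (q j:ℝ)^3 := by positivity
      have h1 : c ≤ (q j:ℝ)^3 * |mcoef μ (q j)| := by
        have h := hH (q j) (by omega)
        rw [div_le_iff₀ hkp] at h
        linarith [h]
      have d1 : (0:ℝ) < (q j:ℝ)-1 := by linarith
      have d2 : (0:ℝ) < (q j:ℝ)+1 := by linarith
      have habs : |mcoef μ (q j)| ≤ |S (q j - 1)|/(((q j:ℝ)-1)^3*Real.pi^3)
          + |S (q j + 1)|/(((q j:ℝ)+1)^3*Real.pi^3) := by
        rw [hval j]
        have htri := abs_add_le (S (q j - 1)/(((q j:ℝ)-1)^3*Real.pi^3))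
          (-(S (q j + 1)/(((q j:ℝ)+1)^3*Real.pi^3)))
        rw [abs_neg, ← sub_eq_add_neg] at htri
        have e1 : |S (q j - 1)/(((q j:ℝ)-1)^3*Real.pi^3)|
            = |S (q j - 1)|/(((q j:ℝ)-1)^3*Real.pi^3) := by
          rw [abs_div, abs_of_pos (show (0:ℝ) < ((q j:ℝ)-1)^3*Real.pi^3 by positivity)]
        have e2 : |S (q j + 1)/(((q j:ℝ)+1)^3*Real.pi^3)|
            = |S (q j + 1)|/(((q j:ℝ)+1)^3*Real.pi^3) := by
          rw [abs_div, abs_of_pos (show (0:ℝ) < ((q j:ℝ)+1)^3*Real.pi^3 by positivity)]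
        rw [e1, e2] at htri
        exact htri
      have hfrac1 : (q j:ℝ)^3/((((q j:ℝ)-1)^3)*Real.pi^3) ≤ 8/Real.pi^3 := by
        rw [div_le_div_iff₀ (by positivity) (by positivity)]
        have hle : (q j:ℝ)^3 ≤ 8*((q j:ℝ)-1)^3 := by
          have h := pow_le_pow_left₀ (by linarith : (0:ℝ) ≤ (q j:ℝ))
            (by linarith : (q j:ℝ) ≤ 2*((q j:ℝ)-1)) 3
          calc (q j:ℝ)^3 ≤ (2*((q j:ℝ)-1))^3 := h
          _ = 8*((q j:ℝ)-1)^3 := by ring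
        nlinarith [pow_pos hπ 3]
      have hfrac2 : (q j:ℝ)^3/((((q j:ℝ)+1)^3)*Real.pi^3) ≤ 8/Real.pi^3 := by
        rw [div_le_div_iff₀ (by positivity) (by positivity)]
        have hle : (q j:ℝ)^3 ≤ 8*((q j:ℝ)+1)^3 := by
          have h := pow_le_pow_left₀ (by linarith : (0:ℝ) ≤ (q j:ℝ))
            (by linarith : (q j:ℝ) ≤ 2*((q j:ℝ)+1)) 3
          calc (q j:ℝ)^3 ≤ (2*((q j:ℝ)+1))^3 := h
          _ = 8*((q j:ℝ)+1)^3 := by ring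
        nlinarith [pow_pos hπ 3]
      calc c ≤ (q j:ℝ)^3 * |mcoef μ (q j)| := h1
        _ ≤ (q j:ℝ)^3 * (|S (q j - 1)|/(((q j:ℝ)-1)^3*Real.pi^3)
              + |S (q j + 1)|/(((q j:ℝ)+1)^3*Real.pi^3)) :=
            mul_le_mul_of_nonneg_left habs (by positivity)
        _ = ((q j:ℝ)^3/((((q j:ℝ)-1)^3)*Real.pi^3)) * |S (q j - 1)|
              + ((q j:ℝ)^3/((((q j:ℝ)+1)^3)*Real.pi^3)) * |S (q j + 1)| := by
            ring
        _ ≤ 8/Real.pi^3 * |S (q j - 1)| + 8/Real.pi^3 * |S (q j + 1)| :=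
            add_le_add (mul_le_mul_of_nonneg_right hfrac1 (abs_nonneg _))
              (mul_le_mul_of_nonneg_right hfrac2 (abs_nonneg _))
    have hidx1 : Filter.Tendsto (fun j : ℕ => q j - 1) Filter.atTop Filter.atTop := by
      apply Filter.tendsto_atTop_mono (fun j => ?_) Filter.tendsto_id
      simp only [hqdef, id_eq]
      omega
    have hidx2 : Filter.Tendsto (fun j : ℕ => q j + 1) Filter.atTop Filter.atTop := by
      apply Filter.tendsto_atTop_mono (fun j => ?_) Filter.tendsto_id
      simp only [hqdef, id_eq]
      omega
    have hS1 : Filter.Tendsto (fun j : ℕ => |S (q j - 1)|) Filter.atTop (nhds 0) := by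
      have := (hS.comp hidx1).abs
      simpa using this
    have hS2 : Filter.Tendsto (fun j : ℕ => |S (q j + 1)|) Filter.atTop (nhds 0) := by
      have := (hS.comp hidx2).abs
      simpa using this
    have hE : Filter.Tendsto
        (fun j => 8/Real.pi^3 * |S (q j - 1)| + 8/Real.pi^3 * |S (q j + 1)|)
        Filter.atTop (nhds 0) := by
      have := (hS1.const_mul (8/Real.pi^3)).add (hS2.const_mul (8/Real.pi^3))
      simpa using this
    have hev : ∀ᶠ j in Filter.atTop,
        8/Real.pi^3 * |S (q j - 1)| + 8/Real.pi^3 * |S (q j + 1)| < c :=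
      hE.eventually_lt_const hcpos
    obtain ⟨j, hj⟩ := hev.exists
    exact absurd (hub j) (not_le.mpr hj)
  constructor
  · intro hBA
    exact key 1 (by rw [hBA]; norm_num)
  · intro hBA
    exact key 0 (by rw [hBA]; norm_num)
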